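/- Let A be a deterministic generalised Büchi automaton with n states and a colour set of size k. Then there exists a deterministic generalised Büchi automaton B with L(B) = L(A) such that B has at most as many states as every deterministic generalised Büchi automaton equivalent to A (i.e., B has a minimal number of states), and the colour set of B has size at most n²·k. -/

import Mathlib

/-- A transition of an automaton: source state, input letter, output colour,
destination state.  (Acceptance is transition-based.) -/
structure AutTrans (Q A Γ : Type) where
  src : Q
  lab : A
  out : Γ
  dst : Q

/-- An (ω-)automaton with finite state set `Q`, input alphabet `A`,
output alphabet `Γ`, initial state `init`, transition set `delta` and
acceptance condition `acc ⊆ Γ^ω`. -/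
structure Automaton (A Γ : Type) where
  Q : Type
  fin : Fintype Q
  init : Q
  delta : Set (AutTrans Q A Γ)
  acc : Set (ℕ → Γ)

/-- The generalised Büchi condition over the colour set `C`
(output alphabet `𝒫(C)`): every colour appears infinitely often. -/
def genBuchi (C : Type) : Set (ℕ → Set C) :=
  {f | ∀ c : C, ∀ n : ℕ, ∃ m : ℕ, n ≤ m ∧ c ∈ f m}

/-- The generalised coBüchi condition over the colour set `C`:
some colour appears only finitely often. -/
def genCoBuchi (C : Type) : Set (ℕ → Set C) :=
  {f | ∃ c : C, ∃ n : ℕ, ∀ m : ℕ, n ≤ m → c ∉ f m}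

namespace Automaton

variable {A Γ : Type}

/-- Number of states. -/
def size (M : Automaton A Γ) : ℕ := @Fintype.card M.Q M.fin

/-- `ρ` is a run of `M` on the word `w`, starting in the state `q`. -/
def IsRunFrom (M : Automaton A Γ) (q : M.Q) (w : ℕ → A)
    (ρ : ℕ → AutTrans M.Q A Γ) : Prop :=
  (ρ 0).src = q ∧ ∀ n : ℕ, ρ n ∈ M.delta ∧ (ρ n).lab = w n ∧ (ρ n).dst = (ρ (n + 1)).src

/-- The language of `M` with initial state `q`. -/
def LangFrom (M : Automaton A Γ) (q : M.Q) : Set (ℕ → A) :=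
  {w | ∃ ρ : ℕ → AutTrans M.Q A Γ, M.IsRunFrom q w ρ ∧ (fun n => (ρ n).out) ∈ M.acc}

/-- The language of `M`. -/
def Lang (M : Automaton A Γ) : Set (ℕ → A) := M.LangFrom M.init

/-- For every state and letter there is at most one outgoing transition. -/
def Deterministic (M : Automaton A Γ) : Prop :=
  ∀ t ∈ M.delta, ∀ t' ∈ M.delta, t.src = t'.src → t.lab = t'.lab → t = t'

/-- For every state and letter there is at least one outgoing transition. -/
def Complete (M : Automaton A Γ) : Prop :=
  ∀ (p : M.Q) (a : A), ∃ t ∈ M.delta, t.src = p ∧ t.lab = a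

/-- The infinite sequence of transitions chosen by a resolver `r` on the word `w`
(`r` is applied to all nonempty finite prefixes of `w`). -/
def resRun (M : Automaton A Γ) (r : List A → AutTrans M.Q A Γ) (w : ℕ → A) :
    ℕ → AutTrans M.Q A Γ :=
  fun n => r (List.ofFn fun i : Fin (n + 1) => w i)

/-- `r` is a resolver for `M`: on every word it induces a run,
which is accepting whenever the word is in the language of `M`. -/
def IsResolver (M : Automaton A Γ) (r : List A → AutTrans M.Q A Γ) : Prop :=
  ∀ w : ℕ → A, M.IsRunFrom M.init w (M.resRun r w) ∧
    (w ∈ M.Lang → (fun n => (M.resRun r w n).out) ∈ M.acc)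

/-- History-determinism: existence of a resolver. -/
def HistoryDeterministic (M : Automaton A Γ) : Prop := ∃ r, M.IsResolver r

/-- `M` admits a resolver such that every state occurs on some accepting run
induced by the resolver. -/
def ResolverTrim (M : Automaton A Γ) : Prop :=
  ∃ r, M.IsResolver r ∧ ∀ q : M.Q, ∃ w ∈ M.Lang, ∃ n : ℕ, (M.resRun r w n).src = q

/-- Reachability along transitions of `M`. -/
def Reach (M : Automaton A Γ) (p q : M.Q) : Prop :=
  Relation.ReflTransGen (fun x y => ∃ t ∈ M.delta, t.src = x ∧ t.dst = y) p q

/-- Nondeterministic choices lead to language-equivalent states. -/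
def SemanticallyDeterministic (M : Automaton A Γ) : Prop :=
  ∀ t ∈ M.delta, ∀ t' ∈ M.delta, t.src = t'.src → t.lab = t'.lab →
    M.LangFrom t.dst = M.LangFrom t'.dst

/- CoBüchi notions: a coBüchi automaton has output alphabet `Set Unit`
(`𝒫(C)` with `|C| = 1`); a transition is a coBüchi transition iff its output
is `{()}` (i.e. `() ∈ out`), and safe iff its output is `∅`. -/

/-- A safe (non-coBüchi) transition from `p` to `q`. -/
def SafeStep (M : Automaton A (Set Unit)) (p q : M.Q) : Prop :=
  ∃ t ∈ M.delta, t.src = p ∧ t.dst = q ∧ () ∉ t.out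

/-- `p` and `q` lie in the same safe component (same SCC of the safe graph). -/
def SafeConn (M : Automaton A (Set Unit)) (p q : M.Q) : Prop :=
  Relation.ReflTransGen M.SafeStep p q ∧ Relation.ReflTransGen M.SafeStep q p

/-- The safe component (as a set of states) of `q`. -/
def safeComponentOf (M : Automaton A (Set Unit)) (q : M.Q) : Set M.Q :=
  {p | M.SafeConn p q}

/-- `(S, D)` is a safe component of `M`, given with its set of safe transitions. -/
def IsSafeComponent (M : Automaton A (Set Unit)) (S : Set M.Q)
    (D : Set (AutTrans M.Q A (Set Unit))) : Prop :=
  (∃ q : M.Q, S = M.safeComponentOf q) ∧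
    D = {t | t ∈ M.delta ∧ t.src ∈ S ∧ t.dst ∈ S ∧ () ∉ t.out}

/-- The safe language of the state `q`: words labelling an infinite safe path from `q`. -/
def SafeLang (M : Automaton A (Set Unit)) (q : M.Q) : Set (ℕ → A) :=
  {w | ∃ ρ : ℕ → AutTrans M.Q A (Set Unit),
    M.IsRunFrom q w ρ ∧ ∀ n : ℕ, () ∉ (ρ n).out}

/-- The automaton restricted to safe transitions is deterministic. -/
def SafeDeterministic (M : Automaton A (Set Unit)) : Prop :=
  ∀ t ∈ M.delta, ∀ t' ∈ M.delta, () ∉ t.out → () ∉ t'.out →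
    t.src = t'.src → t.lab = t'.lab → t = t'

/-- Every transition joining two distinct safe components is a coBüchi transition. -/
def NormalForm (M : Automaton A (Set Unit)) : Prop :=
  ∀ t ∈ M.delta, () ∉ t.out → M.SafeConn t.src t.dst

/-- A coBüchi automaton is nice if all states are reachable and it is
semantically deterministic, in normal form, and safe deterministic. -/
def Nice (M : Automaton A (Set Unit)) : Prop :=
  (∀ q : M.Q, M.Reach M.init q) ∧ M.SemanticallyDeterministic ∧
    M.NormalForm ∧ M.SafeDeterministic

/-- Equivalent states with equal safe languages are equal. -/
def SafeMinimal (M : Automaton A (Set Unit)) : Prop :=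
  ∀ p q : M.Q, M.LangFrom p = M.LangFrom q → M.SafeLang p = M.SafeLang q → p = q

/-- Equivalent states with safe languages comparable for inclusion lie in the
same safe component. -/
def SafeCentralised (M : Automaton A (Set Unit)) : Prop :=
  ∀ p q : M.Q, M.LangFrom p = M.LangFrom q →
    (M.SafeLang p ⊆ M.SafeLang q ∨ M.SafeLang q ⊆ M.SafeLang p) → M.SafeConn p q

end Automaton

/-- The word `u · w`. -/
def wordAppend {A : Type} (u : List A) (w : ℕ → A) : ℕ → A :=
  fun n => if h : n < u.length then u.get ⟨n, h⟩ else w (n - u.length)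

/-- The residual `u⁻¹L`. -/
def residualLang {A : Type} (u : List A) (L : Set (ℕ → A)) : Set (ℕ → A) :=
  {w | wordAppend u w ∈ L}

/-- `L` is prefix-independent: `u⁻¹L = L` for every finite word `u`. -/
def PrefixIndependent {A : Type} (L : Set (ℕ → A)) : Prop :=
  ∀ u : List A, residualLang u L = L

/-- The local alphabet `Σ_R` at the residual `R`: nonempty finite words `v`
with `v⁻¹R = R` such that no proper nonempty prefix `v'` of `v`
satisfies `v'⁻¹R = R`.  (For `R = u⁻¹L` this says `(uv)⁻¹L = u⁻¹L` and
`(uv')⁻¹L ≠ u⁻¹L` for proper nonempty prefixes.) -/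
def localAlphabet {A : Type} (R : Set (ℕ → A)) : Set (List A) :=
  {v | v ≠ [] ∧ residualLang v R = R ∧
    ∀ v' : List A, v' <+: v → v' ≠ [] → v' ≠ v → residualLang v' R ≠ R}

/-- `PathCol M q w X p`: there is a finite path of `M` from `q` to `p`
labelled by `w` whose transitions produce exactly the set of colours `X`
(the union of the outputs along the path). -/
inductive PathCol {A C : Type} (M : Automaton A (Set C)) :
    M.Q → List A → Set C → M.Q → Prop
  | nil (q : M.Q) : PathCol M q [] ∅ q
  | cons {q r : M.Q} {a : A} {w : List A} {X : Set C}
      (t : AutTrans M.Q A (Set C)) (ht : t ∈ M.delta) (hsrc : t.src = q)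
      (hlab : t.lab = a) (htail : PathCol M t.dst w X r) :
      PathCol M q (a :: w) (t.out ∪ X) r

/-- The localisation `A|_R` of a generalised coBüchi automaton `M` to the
residual `R`, with initial state `q0`: states are the states of `M`
recognising `R`, the alphabet is `Σ_R`, and there is a transition
`q →^{w:X} p` for every finite path of `M` from `q` to `p` labelled by
`w ∈ Σ_R` producing the set of colours `X`. -/
noncomputable def localAut {A C : Type} (M : Automaton A (Set C)) (R : Set (ℕ → A))
    (q0 : {q : M.Q // M.LangFrom q = R}) :
    Automaton (↥(localAlphabet R)) (Set C) where
  Q := {q : M.Q // M.LangFrom q = R}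
  fin := by
    letI := M.fin
    classical
    infer_instance
  init := q0
  delta := {t | PathCol M t.src.1 t.lab.1 t.out t.dst.1}
  acc := genCoBuchi C

/-- The automaton `M` with initial state `q`. -/
def withInit {A Γ : Type} (M : Automaton A Γ) (q : M.Q) : Automaton A Γ :=
  { M with init := q }

/-- Recolour the automaton `M` via `f`, keeping states, initial state and the
underlying transitions, and replacing the acceptance condition by `acc'`. -/
def recolor {A Γ Γ' : Type} (M : Automaton A Γ) (f : AutTrans M.Q A Γ → Γ')
    (acc' : Set (ℕ → Γ')) : Automaton A Γ' where
  Q := M.Q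
  fin := M.fin
  init := M.init
  delta := {t' | ∃ t ∈ M.delta, t'.src = t.src ∧ t'.lab = t.lab ∧ t'.out = f t ∧ t'.dst = t.dst}
  acc := acc'

/-- Concatenation of the first `k` blocks of a sequence of finite words. -/
def flattenPrefix {A : Type} (u : ℕ → List A) (k : ℕ) : List A :=
  (List.ofFn fun i : Fin k => u i).flatten

/-- `x ∈ A^ω` is the concatenation of the infinite sequence of finite words `u`. -/
def IsFlatten {A : Type} (u : ℕ → List A) (x : ℕ → A) : Prop :=
  ∀ (k n : ℕ) (h : n < (flattenPrefix u k).length),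
    (flattenPrefix u k).get ⟨n, h⟩ = x n

/-- Cascade composition `B ∘ M`: the outputs of `M` are fed as inputs to `B`. -/
def composeAut {A Γ Γ' : Type} (B : Automaton Γ Γ') (M : Automaton A Γ) :
    Automaton A Γ' where
  Q := M.Q × B.Q
  fin := by letI := M.fin; letI := B.fin; infer_instance
  init := (M.init, B.init)
  delta := {t | ∃ tM ∈ M.delta, ∃ tB ∈ B.delta,
    t.src = (tM.src, tB.src) ∧ t.lab = tM.lab ∧ tB.lab = tM.out ∧
    t.out = tB.out ∧ t.dst = (tM.dst, tB.dst)}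
  acc := B.acc

/-- The language `L_G = ⋂_v L_v` associated with a graph `G`: words over the
vertices such that for every vertex `v`, either the factor `vv` occurs
infinitely often, or letters outside the closed neighbourhood `N[v]` occur
infinitely often. -/
def LG {V : Type} (G : SimpleGraph V) : Set (ℕ → V) :=
  {w | ∀ v : V, (∀ n : ℕ, ∃ m : ℕ, n ≤ m ∧ w m = v ∧ w (m + 1) = v) ∨
      (∀ n : ℕ, ∃ m : ℕ, n ≤ m ∧ w m ≠ v ∧ ¬ G.Adj v (w m))}

namespace S17

open Classical

variable {A : Type}

lemma AutTrans.ext' {Q A Γ : Type} {t t' : AutTrans Q A Γ} (h1 : t.src = t'.src)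
    (h2 : t.lab = t'.lab) (h3 : t.out = t'.out) (h4 : t.dst = t'.dst) : t = t' := by
  cases t; cases t'; simp_all

lemma run_unique {Γ : Type} (N : Automaton A Γ) (hdet : N.Deterministic)
    {q : N.Q} {w : ℕ → A} {ρ ρ' : ℕ → AutTrans N.Q A Γ}
    (h : N.IsRunFrom q w ρ) (h' : N.IsRunFrom q w ρ') : ∀ n, ρ n = ρ' n := by
  have key : ∀ n, (ρ n).src = (ρ' n).src → ρ n = ρ' n := fun n hs =>
    hdet _ (h.2 n).1 _ (h'.2 n).1 hs (by rw [(h.2 n).2.1, (h'.2 n).2.1])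
  intro n
  induction n with
  | zero => exact key 0 (h.1.trans h'.1.symm)
  | succ n ih => exact key (n+1) (by rw [← (h.2 n).2.2, ← (h'.2 n).2.2, ih])

/-- generic "append at position i" of two sequences -/
def waF {X : Type} (i : ℕ) (f g : ℕ → X) : ℕ → X := fun n => if n < i then f n else g (n - i)

lemma suffix_mem_langFrom {β : Type} (B : Automaton A (Set β)) (hacc : B.acc = genBuchi β)
    {w : ℕ → A} {ρ} (hrun : B.IsRunFrom B.init w ρ)
    (hA : (fun n => (ρ n).out) ∈ B.acc) (i : ℕ) :
    (fun n => w (n + i)) ∈ B.LangFrom (ρ i).src := by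
  refine ⟨fun n => ρ (n + i), ⟨by simp, fun n => ⟨(hrun.2 (n+i)).1, (hrun.2 (n+i)).2.1, ?_⟩⟩, ?_⟩
  · show (ρ (n+i)).dst = (ρ (n+1+i)).src
    have : n + 1 + i = (n + i) + 1 := by omega
    rw [this]; exact (hrun.2 (n+i)).2.2
  · rw [hacc] at hA ⊢
    intro d n
    obtain ⟨m, hm, hd⟩ := hA d (n + i)
    refine ⟨m - i, by omega, ?_⟩
    show d ∈ (ρ (m - i + i)).out
    have : m - i + i = m := by omega
    rw [this]; exact hd

lemma glue_mem_lang {β : Type} (B : Automaton A (Set β)) (hacc : B.acc = genBuchi β)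
    {w : ℕ → A} {ρ} (hrun : B.IsRunFrom B.init w ρ) (i : ℕ) {v : ℕ → A}
    (hv : v ∈ B.LangFrom (ρ i).src) : waF i w v ∈ B.Lang := by
  obtain ⟨ν, hν, hνacc⟩ := hv
  refine ⟨waF i ρ ν, ⟨?_, fun n => ?_⟩, ?_⟩
  · by_cases h : 0 < i
    · simpa [waF, h] using hrun.1
    · have hi : i = 0 := by omega
      subst hi
      simpa [waF] using hν.1.trans (by rw [hrun.1])
  · by_cases h : n < i
    · by_cases h' : n + 1 < i
      · simpa [waF, h, h'] using ⟨(hrun.2 n).1, (hrun.2 n).2.1, (hrun.2 n).2.2⟩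
      · have hi : n + 1 = i := by omega
        refine ⟨by simpa [waF, h] using (hrun.2 n).1, by simpa [waF, h] using (hrun.2 n).2.1, ?_⟩
        have : waF i ρ ν (n+1) = ν 0 := by simp [waF, hi]
        rw [this]
        have h2 : waF i ρ ν n = ρ n := by simp [waF, h]
        rw [h2, hν.1, ← hi]
        exact (hrun.2 n).2.2
    · have h' : ¬ (n + 1 < i) := by omega
      have e1 : waF i ρ ν n = ν (n - i) := by simp [waF, h]
      have e2 : waF i ρ ν (n+1) = ν (n - i + 1) := by
        have : n + 1 - i = n - i + 1 := by omega
        simp [waF, h', this]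
      have e3 : waF i w v n = v (n - i) := by simp [waF, h]
      rw [e1, e2, e3]
      exact ⟨(hν.2 (n-i)).1, (hν.2 (n-i)).2.1, (hν.2 (n-i)).2.2⟩
  · rw [hacc]
    intro d n
    rw [hacc] at hνacc
    obtain ⟨m, hm, hd⟩ := hνacc d n
    refine ⟨m + i, by omega, ?_⟩
    show d ∈ (waF i ρ ν (m+i)).out
    have : waF i ρ ν (m + i) = ν m := by simp [waF]
    rw [this]; exact hd

end S17
namespace S17

variable {A : Type}

/-- The trimmed automaton: restrict to states with nonempty residual language. -/
noncomputable def trimAut {D : Type} (B : Automaton A (Set D)) (h0 : B.LangFrom B.init ≠ ∅) :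
    Automaton A (Set D) where
  Q := {b : B.Q // B.LangFrom b ≠ ∅}
  fin := @Subtype.fintype _ _ (fun _ => Classical.propDecidable _) B.fin
  init := ⟨B.init, h0⟩
  delta := {t | (⟨t.src.1, t.lab, t.out, t.dst.1⟩ : AutTrans B.Q A (Set D)) ∈ B.delta}
  acc := B.acc

lemma trim_det {D : Type} {B : Automaton A (Set D)} (h0 : B.LangFrom B.init ≠ ∅)
    (hdet : B.Deterministic) : (trimAut B h0).Deterministic := by
  intro t ht t' ht' hs hl
  have := hdet _ ht _ ht' (by rw [hs]) (by exact hl)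
  rw [AutTrans.mk.injEq] at this
  exact AutTrans.ext' (Subtype.ext this.1) this.2.1 this.2.2.1 (Subtype.ext this.2.2.2)

lemma trim_size {D : Type} {B : Automaton A (Set D)} (h0 : B.LangFrom B.init ≠ ∅) :
    (trimAut B h0).size ≤ B.size :=
  @Fintype.card_le_of_injective _ _ ((trimAut B h0).fin) B.fin Subtype.val Subtype.val_injective

lemma trim_proj_run {D : Type} {B : Automaton A (Set D)} (h0 : B.LangFrom B.init ≠ ∅)
    {w : ℕ → A} {ρ} (h : (trimAut B h0).IsRunFrom (trimAut B h0).init w ρ) :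
    B.IsRunFrom B.init w
      (fun n => ⟨(ρ n).src.1, (ρ n).lab, (ρ n).out, (ρ n).dst.1⟩) := by
  refine ⟨congrArg Subtype.val h.1, fun n => ⟨(h.2 n).1, (h.2 n).2.1, ?_⟩⟩
  exact congrArg Subtype.val (h.2 n).2.2

lemma trim_lang {D : Type} {B : Automaton A (Set D)} (h0 : B.LangFrom B.init ≠ ∅)
    (hacc : B.acc = genBuchi D) : (trimAut B h0).Lang = B.Lang := by
  ext w
  constructor
  · rintro ⟨ρ, hρ, hA⟩
    exact ⟨_, trim_proj_run h0 hρ, hA⟩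
  · rintro ⟨τ, hτ, hA⟩
    have hne : ∀ n, B.LangFrom (τ n).src ≠ ∅ := fun n =>
      Set.nonempty_iff_ne_empty.mp ⟨_, suffix_mem_langFrom B hacc hτ hA n⟩
    have hne2 : ∀ n, B.LangFrom (τ n).dst ≠ ∅ := fun n => by
      rw [(hτ.2 n).2.2]; exact hne (n+1)
    refine ⟨fun n => ⟨⟨(τ n).src, hne n⟩, (τ n).lab, (τ n).out, ⟨(τ n).dst, hne2 n⟩⟩,
      ⟨Subtype.ext hτ.1, fun n => ⟨(hτ.2 n).1, (hτ.2 n).2.1, Subtype.ext (hτ.2 n).2.2⟩⟩, hA⟩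

/-- A finite run on the first `i` letters of `w`. -/
def FinRun {Γ : Type} (N : Automaton A Γ) (w : ℕ → A) (i : ℕ)
    (τ : ℕ → AutTrans N.Q A Γ) : Prop :=
  (τ 0).src = N.init ∧
    ∀ j, j < i → (τ j ∈ N.delta ∧ (τ j).lab = w j ∧ (τ j).dst = (τ (j+1)).src)

lemma finRun_mono {Γ : Type} {N : Automaton A Γ} {w i τ} (h : FinRun N w i τ)
    {j : ℕ} (hj : j ≤ i) : FinRun N w j τ :=
  ⟨h.1, fun l hl => h.2 l (lt_of_lt_of_le hl hj)⟩

lemma finRun_unique {Γ : Type} {N : Automaton A Γ} (hdet : N.Deterministic) {w : ℕ → A}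
    {i : ℕ} {τ τ'} (h : FinRun N w i τ) (h' : FinRun N w i τ') :
    ∀ j, j < i → τ j = τ' j := by
  have src : ∀ j, j < i → (τ j).src = (τ' j).src → τ j = τ' j := fun j hj hs =>
    hdet _ (h.2 j hj).1 _ (h'.2 j hj).1 hs (by rw [(h.2 j hj).2.1, (h'.2 j hj).2.1])
  intro j
  induction j with
  | zero => exact fun hj => src 0 hj (h.1.trans h'.1.symm)
  | succ j ih =>
      intro hj
      have hjlt : j < i := by omega
      exact src (j+1) hj (by rw [← (h.2 j hjlt).2.2, ← (h'.2 j hjlt).2.2, ih hjlt])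

lemma run_of_finRuns {Γ : Type} (N : Automaton A Γ) (hdet : N.Deterministic) {w : ℕ → A}
    (h : ∀ i, ∃ τ, FinRun N w i τ) : ∃ σ, N.IsRunFrom N.init w σ := by
  choose τ hτ using h
  have key : ∀ n, τ (n+1) n = τ (n+2) n := fun n =>
    finRun_unique hdet (hτ (n+1)) (finRun_mono (hτ (n+2)) (by omega)) n (by omega)
  refine ⟨fun n => τ (n+1) n, (hτ 1).1, fun n => ⟨((hτ (n+1)).2 n (by omega)).1,
    ((hτ (n+1)).2 n (by omega)).2.1, ?_⟩⟩
  show (τ (n+1) n).dst = (τ (n+2) (n+1)).src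
  rw [key n]
  exact ((hτ (n+2)).2 n (by omega)).2.2

lemma exists_M_run {C D : Type} (M : Automaton A (Set C)) (hdetM : M.Deterministic)
    (B : Automaton A (Set D)) (haccB : B.acc = genBuchi D) (hL : B.Lang = M.Lang)
    (h0 : B.LangFrom B.init ≠ ∅) {w : ℕ → A} {ρ}
    (hρ : (trimAut B h0).IsRunFrom (trimAut B h0).init w ρ) :
    ∃ σ, M.IsRunFrom M.init w σ := by
  apply run_of_finRuns M hdetM
  intro i
  obtain ⟨v, hv⟩ := Set.nonempty_iff_ne_empty.mpr ((ρ i).src.2)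
  have hmem : waF i w v ∈ B.Lang :=
    glue_mem_lang B haccB (trim_proj_run h0 hρ) i hv
  rw [hL] at hmem
  obtain ⟨μ, hμ, _⟩ := hmem
  refine ⟨μ, hμ.1, fun j hj => ⟨(hμ.2 j).1, ?_, (hμ.2 j).2.2⟩⟩
  rw [(hμ.2 j).2.1]; simp [waF, hj]

end S17
namespace S17

variable {A : Type}

/-- time-indexing function for splicing two loops -/
def sel (i₁ i₂ i₁' i₂' : ℕ) (n : ℕ) : Bool × ℕ :=
  if n < i₁ then (true, n)
  else if (n - i₁) % ((i₂ - i₁) + (i₂' - i₁')) < i₂ - i₁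
    then (true, i₁ + (n - i₁) % ((i₂ - i₁) + (i₂' - i₁')))
    else (false, i₁' + ((n - i₁) % ((i₂ - i₁) + (i₂' - i₁')) - (i₂ - i₁)))

section SelLemmas

variable {i₁ i₂ i₁' i₂' : ℕ}

lemma sel_lt {n : ℕ} (hn : n < i₁) : sel i₁ i₂ i₁' i₂' n = (true, n) := by
  simp [sel, hn]

lemma sel_ge_lt {n : ℕ} (hn : ¬ n < i₁)
    (hlt : (n - i₁) % ((i₂ - i₁) + (i₂' - i₁')) < i₂ - i₁) :
    sel i₁ i₂ i₁' i₂' n = (true, i₁ + (n - i₁) % ((i₂ - i₁) + (i₂' - i₁'))) := by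
  simp [sel, hn, hlt]

lemma sel_ge_ge {n : ℕ} (hn : ¬ n < i₁)
    (hlt : ¬ (n - i₁) % ((i₂ - i₁) + (i₂' - i₁')) < i₂ - i₁) :
    sel i₁ i₂ i₁' i₂' n =
      (false, i₁' + ((n - i₁) % ((i₂ - i₁) + (i₂' - i₁')) - (i₂ - i₁))) := by
  simp [sel, hn, hlt]

lemma sel_zero (h1 : i₁ < i₂) : sel i₁ i₂ i₁' i₂' 0 = (true, 0) := by
  by_cases h : 0 < i₁
  · exact sel_lt h
  · have hi : i₁ = 0 := by omega
    have e : (0 - i₁) % ((i₂ - i₁) + (i₂' - i₁')) = 0 := by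
      rw [hi]; simp
    rw [sel_ge_lt (by omega) (by rw [e]; omega), e, hi]

lemma sel_succ_mod (h1 : i₁ < i₂) (h2 : i₁' < i₂') {n : ℕ} (hn : ¬ n < i₁) :
    (n + 1 - i₁) % ((i₂ - i₁) + (i₂' - i₁')) =
      if (n - i₁) % ((i₂ - i₁) + (i₂' - i₁')) + 1 = (i₂ - i₁) + (i₂' - i₁') then 0
      else (n - i₁) % ((i₂ - i₁) + (i₂' - i₁')) + 1 := by
  set p := (i₂ - i₁) + (i₂' - i₁') with hpdef
  have hp : 0 < p := by omega
  set r := (n - i₁) % p with hrdef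
  have hr : r < p := Nat.mod_lt _ hp
  have hq : n + 1 - i₁ = (n - i₁) + 1 := by omega
  have e1 : (n + 1 - i₁) % p = (r + 1) % p := by
    rw [hq, hrdef, Nat.mod_add_mod]
  by_cases hcase : r + 1 = p
  · rw [if_pos hcase, e1, hcase, Nat.mod_self]
  · rw [if_neg hcase, e1, Nat.mod_eq_of_lt (by omega)]

lemma sel_step (h1 : i₁ < i₂) (h2 : i₁' < i₂') (n : ℕ) :
    (∃ t, sel i₁ i₂ i₁' i₂' n = (true, t) ∧ sel i₁ i₂ i₁' i₂' (n+1) = (true, t+1)) ∨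
    (sel i₁ i₂ i₁' i₂' n = (true, i₂ - 1) ∧ sel i₁ i₂ i₁' i₂' (n+1) = (false, i₁')) ∨
    (∃ t, sel i₁ i₂ i₁' i₂' n = (false, t) ∧ sel i₁ i₂ i₁' i₂' (n+1) = (false, t+1)) ∨
    (sel i₁ i₂ i₁' i₂' n = (false, i₂' - 1) ∧ sel i₁ i₂ i₁' i₂' (n+1) = (true, i₁)) := by
  by_cases hn : n < i₁
  · left
    refine ⟨n, sel_lt hn, ?_⟩
    by_cases hn1 : n + 1 < i₁
    · exact sel_lt hn1
    · have hi : i₁ = n + 1 := by omega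
      have e : (n + 1 - i₁) % ((i₂ - i₁) + (i₂' - i₁')) = 0 := by rw [hi]; simp
      rw [sel_ge_lt hn1 (by rw [e]; omega), e, hi]
  · have hmod := sel_succ_mod (i₂ := i₂) (i₂' := i₂') h1 h2 hn
    have hp : 0 < (i₂ - i₁) + (i₂' - i₁') := by omega
    set r := (n - i₁) % ((i₂ - i₁) + (i₂' - i₁')) with hrdef
    have hr : r < (i₂ - i₁) + (i₂' - i₁') := Nat.mod_lt _ hp
    have hn1 : ¬ n + 1 < i₁ := by omega
    by_cases hc1 : r + 1 < i₂ - i₁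
    · left
      refine ⟨i₁ + r, sel_ge_lt hn (by omega), ?_⟩
      have e : (n + 1 - i₁) % ((i₂ - i₁) + (i₂' - i₁')) = r + 1 := by
        rw [hmod, if_neg (by omega)]
      rw [sel_ge_lt hn1 (by rw [e]; omega), e, Prod.mk.injEq]
      exact ⟨rfl, by omega⟩
    · by_cases hc2 : r + 1 = i₂ - i₁
      · right; left
        constructor
        · rw [sel_ge_lt hn (by omega), Prod.mk.injEq]
          exact ⟨rfl, by omega⟩
        · have e : (n + 1 - i₁) % ((i₂ - i₁) + (i₂' - i₁')) = i₂ - i₁ := by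
            rw [hmod, if_neg (by omega)]; omega
          rw [sel_ge_ge hn1 (by omega), e, Prod.mk.injEq]
          exact ⟨rfl, by omega⟩
      · have har : i₂ - i₁ ≤ r := by omega
        by_cases hc3 : r + 1 < (i₂ - i₁) + (i₂' - i₁')
        · right; right; left
          refine ⟨i₁' + (r - (i₂ - i₁)), sel_ge_ge hn (by omega), ?_⟩
          have e : (n + 1 - i₁) % ((i₂ - i₁) + (i₂' - i₁')) = r + 1 := by
            rw [hmod, if_neg (by omega)]
          rw [sel_ge_ge hn1 (by rw [e]; omega), e, Prod.mk.injEq]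
          exact ⟨rfl, by omega⟩
        · have hc4 : r + 1 = (i₂ - i₁) + (i₂' - i₁') := by omega
          right; right; right
          constructor
          · rw [sel_ge_ge hn (by omega), Prod.mk.injEq]
            exact ⟨rfl, by omega⟩
          · have e : (n + 1 - i₁) % ((i₂ - i₁) + (i₂' - i₁')) = 0 := by
              rw [hmod, if_pos hc4]
            rw [sel_ge_lt hn1 (by rw [e]; omega), e]
            simp

lemma sel_range (h1 : i₁ < i₂) (h2 : i₁' < i₂') {n : ℕ} (hn : i₁ ≤ n) :
    (∃ t, sel i₁ i₂ i₁' i₂' n = (true, t) ∧ i₁ ≤ t ∧ t < i₂) ∨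
    (∃ t, sel i₁ i₂ i₁' i₂' n = (false, t) ∧ i₁' ≤ t ∧ t < i₂') := by
  have hn' : ¬ n < i₁ := by omega
  have hp : 0 < (i₂ - i₁) + (i₂' - i₁') := by omega
  set r := (n - i₁) % ((i₂ - i₁) + (i₂' - i₁')) with hrdef
  have hr : r < (i₂ - i₁) + (i₂' - i₁') := Nat.mod_lt _ hp
  by_cases hc : r < i₂ - i₁
  · exact Or.inl ⟨i₁ + r, sel_ge_lt hn' hc, by omega, by omega⟩
  · exact Or.inr ⟨i₁' + (r - (i₂ - i₁)), sel_ge_ge hn' hc, by omega, by omega⟩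

lemma sel_loop1 (h1 : i₁ < i₂) (h2 : i₁' < i₂') {t : ℕ} (ht1 : i₁ ≤ t) (ht2 : t < i₂)
    (j : ℕ) : sel i₁ i₂ i₁' i₂' (t + j * ((i₂ - i₁) + (i₂' - i₁'))) = (true, t) := by
  set p := (i₂ - i₁) + (i₂' - i₁') with hpdef
  have hp : 0 < p := by omega
  have hn' : ¬ t + j * p < i₁ := by omega
  have e0 : t + j * p - i₁ = (t - i₁) + j * p := by omega
  have e : (t + j * p - i₁) % p = t - i₁ := by
    rw [e0, Nat.add_mul_mod_self_right, Nat.mod_eq_of_lt (by omega)]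
  rw [sel_ge_lt hn' (by rw [e]; omega), e, Prod.mk.injEq]
  exact ⟨rfl, by omega⟩

lemma sel_loop2 (h1 : i₁ < i₂) (h2 : i₁' < i₂') {t : ℕ} (ht1 : i₁' ≤ t) (ht2 : t < i₂')
    (j : ℕ) : sel i₁ i₂ i₁' i₂'
      (i₁ + (i₂ - i₁) + (t - i₁') + j * ((i₂ - i₁) + (i₂' - i₁'))) = (false, t) := by
  set p := (i₂ - i₁) + (i₂' - i₁') with hpdef
  have hp : 0 < p := by omega
  set m := i₁ + (i₂ - i₁) + (t - i₁') + j * p with hmdef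
  have hn' : ¬ m < i₁ := by omega
  have e0 : m - i₁ = ((i₂ - i₁) + (t - i₁')) + j * p := by omega
  have e : (m - i₁) % p = (i₂ - i₁) + (t - i₁') := by
    rw [e0, Nat.add_mul_mod_self_right, Nat.mod_eq_of_lt (by omega)]
  rw [sel_ge_ge hn' (by rw [e]; omega), e, Prod.mk.injEq]
  exact ⟨rfl, by omega⟩

end SelLemmas

/-- splice two sequences along `sel` -/
def spliceW {X : Type} (i₁ i₂ i₁' i₂' : ℕ) (f₁ f₂ : ℕ → X) (n : ℕ) : X :=
  if (sel i₁ i₂ i₁' i₂' n).1 then f₁ (sel i₁ i₂ i₁' i₂' n).2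
  else f₂ (sel i₁ i₂ i₁' i₂' n).2

lemma spliceW_eq_true {X : Type} {i₁ i₂ i₁' i₂' n t : ℕ} (f₁ f₂ : ℕ → X)
    (h : sel i₁ i₂ i₁' i₂' n = (true, t)) : spliceW i₁ i₂ i₁' i₂' f₁ f₂ n = f₁ t := by
  simp [spliceW, h]

lemma spliceW_eq_false {X : Type} {i₁ i₂ i₁' i₂' n t : ℕ} (f₁ f₂ : ℕ → X)
    (h : sel i₁ i₂ i₁' i₂' n = (false, t)) : spliceW i₁ i₂ i₁' i₂' f₁ f₂ n = f₂ t := by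
  simp [spliceW, h]

/-- Splicing two runs that pass through a common state gives a run. -/
lemma splice_isRun {Γ : Type} (N : Automaton A Γ) {w₁ w₂ : ℕ → A}
    {κ₁ κ₂ : ℕ → AutTrans N.Q A Γ}
    (hκ₁ : N.IsRunFrom N.init w₁ κ₁) (hκ₂ : N.IsRunFrom N.init w₂ κ₂)
    {i₁ i₂ i₁' i₂' : ℕ} (h1 : i₁ < i₂) (h2 : i₁' < i₂') {z : N.Q}
    (e1 : (κ₁ i₁).src = z) (e2 : (κ₁ i₂).src = z)
    (e3 : (κ₂ i₁').src = z) (e4 : (κ₂ i₂').src = z) :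
    N.IsRunFrom N.init (spliceW i₁ i₂ i₁' i₂' w₁ w₂) (spliceW i₁ i₂ i₁' i₂' κ₁ κ₂) := by
  constructor
  · rw [spliceW_eq_true _ _ (sel_zero h1)]
    exact hκ₁.1
  · intro n
    rcases sel_step h1 h2 (i₁' := i₁') (i₂' := i₂') n with
      ⟨t, hn, hn1⟩ | ⟨hn, hn1⟩ | ⟨t, hn, hn1⟩ | ⟨hn, hn1⟩
    · rw [spliceW_eq_true κ₁ κ₂ hn, spliceW_eq_true κ₁ κ₂ hn1,
        spliceW_eq_true w₁ w₂ hn]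
      exact ⟨(hκ₁.2 t).1, (hκ₁.2 t).2.1, (hκ₁.2 t).2.2⟩
    · rw [spliceW_eq_true κ₁ κ₂ hn, spliceW_eq_false κ₁ κ₂ hn1,
        spliceW_eq_true w₁ w₂ hn]
      refine ⟨(hκ₁.2 _).1, (hκ₁.2 _).2.1, ?_⟩
      have : i₂ - 1 + 1 = i₂ := by omega
      rw [(hκ₁.2 (i₂ - 1)).2.2, this, e2, ← e3]
    · rw [spliceW_eq_false κ₁ κ₂ hn, spliceW_eq_false κ₁ κ₂ hn1,
        spliceW_eq_false w₁ w₂ hn]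
      exact ⟨(hκ₂.2 t).1, (hκ₂.2 t).2.1, (hκ₂.2 t).2.2⟩
    · rw [spliceW_eq_false κ₁ κ₂ hn, spliceW_eq_true κ₁ κ₂ hn1,
        spliceW_eq_false w₁ w₂ hn]
      refine ⟨(hκ₂.2 _).1, (hκ₂.2 _).2.1, ?_⟩
      have : i₂' - 1 + 1 = i₂' := by omega
      rw [(hκ₂.2 (i₂' - 1)).2.2, this, e4, ← e1]

end S17
namespace S17

open Classical

variable {A : Type}

lemma exists_small_colour_set {C D : Type} [Fintype C] [Fintype D]
    (M : Automaton A (Set C)) (haccM : M.acc = genBuchi C) (hdetM : M.Deterministic)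
    (B₀ : Automaton A (Set D)) (haccB : B₀.acc = genBuchi D)
    (hL : B₀.Lang = M.Lang)
    (hMr : ∀ (w : ℕ → A) ρ, B₀.IsRunFrom B₀.init w ρ → ∃ σ, M.IsRunFrom M.init w σ) :
    ∃ S₀ : Finset D,
      S₀.card ≤ B₀.size * M.size * Fintype.card C ∧
      (∀ w, w ∈ M.Lang ↔ ∃ ρ, B₀.IsRunFrom B₀.init w ρ ∧
        ∀ d ∈ S₀, ∀ n, ∃ m, n ≤ m ∧ d ∈ (ρ m).out) := by
  classical
  set Rec : Finset D → Prop := fun S => ∀ w, w ∈ M.Lang ↔ ∃ ρ, B₀.IsRunFrom B₀.init w ρ ∧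
      ∀ d ∈ S, ∀ n, ∃ m, n ≤ m ∧ d ∈ (ρ m).out with hRecDef
  have hRecUniv : Rec Finset.univ := by
    intro w
    rw [← hL]
    constructor
    · rintro ⟨ρ, hρ, hA⟩
      rw [haccB] at hA
      exact ⟨ρ, hρ, fun d _ n => hA d n⟩
    · rintro ⟨ρ, hρ, hA⟩
      exact ⟨ρ, hρ, by rw [haccB]; exact fun d n => hA d (Finset.mem_univ d) n⟩
  have hne : {j | ∃ S : Finset D, S.card = j ∧ Rec S}.Nonempty :=
    ⟨Finset.univ.card, Finset.univ, rfl, hRecUniv⟩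
  obtain ⟨S₀, hcard, hRec⟩ := Nat.sInf_mem hne
  have herase : ∀ d ∈ S₀, ¬ Rec (S₀.erase d) := by
    intro d hd hcontra
    have h1 : sInf {j | ∃ S : Finset D, S.card = j ∧ Rec S} ≤ (S₀.erase d).card :=
      Nat.sInf_le ⟨S₀.erase d, rfl, hcontra⟩
    have h2 : (S₀.erase d).card = S₀.card - 1 := Finset.card_erase_of_mem hd
    have h3 : 1 ≤ S₀.card := Finset.card_pos.mpr ⟨d, hd⟩
    omega
  -- existence of rejection witnesses
  have spec_exists : ∀ d ∈ S₀, ∃ (y : B₀.Q × M.Q) (c : C) (w : ℕ → A) (ρ : ℕ → AutTrans B₀.Q A (Set D)) (σ : ℕ → AutTrans M.Q A (Set C)) (N : ℕ),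
      w ∉ M.Lang ∧ B₀.IsRunFrom B₀.init w ρ ∧
      (∀ e ∈ S₀, e ≠ d → ∀ n, ∃ m, n ≤ m ∧ e ∈ (ρ m).out) ∧
      M.IsRunFrom M.init w σ ∧
      (∀ m, N ≤ m → c ∉ (σ m).out) ∧
      (∀ n, ∃ m, n ≤ m ∧ N ≤ m ∧ ((ρ m).src, (σ m).src) = y) := by
    intro d hd
    have hnotRec := herase d hd
    simp only [hRecDef] at hnotRec
    obtain ⟨w, hw⟩ := not_forall.mp hnotRec
    have hdir : w ∈ M.Lang → ∃ ρ, B₀.IsRunFrom B₀.init w ρ ∧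
        ∀ e ∈ S₀.erase d, ∀ n, ∃ m, n ≤ m ∧ e ∈ (ρ m).out := by
      intro hwL
      obtain ⟨ρ, hρ, hA⟩ := (hRec w).mp hwL
      exact ⟨ρ, hρ, fun e he n => hA e (Finset.mem_of_mem_erase he) n⟩
    have hwnot : w ∉ M.Lang ∧ ∃ ρ, B₀.IsRunFrom B₀.init w ρ ∧
        ∀ e ∈ S₀.erase d, ∀ n, ∃ m, n ≤ m ∧ e ∈ (ρ m).out := by
      by_cases hwL : w ∈ M.Lang
      · exact absurd (iff_of_true hwL (hdir hwL)) hw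
      · refine ⟨hwL, ?_⟩
        by_cases hc : ∃ ρ, B₀.IsRunFrom B₀.init w ρ ∧
            ∀ e ∈ S₀.erase d, ∀ n, ∃ m, n ≤ m ∧ e ∈ (ρ m).out
        · exact hc
        · exact absurd (iff_of_false hwL hc) hw
    obtain ⟨hwL, ρ, hρ, hhits⟩ := hwnot
    obtain ⟨σ, hσ⟩ := hMr w ρ hρ
    have hrej : ¬ ((fun n => (σ n).out) ∈ genBuchi C) := fun hacc' =>
      hwL ⟨σ, hσ, by rw [haccM]; exact hacc'⟩
    simp only [genBuchi, Set.mem_setOf_eq] at hrej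
    push_neg at hrej
    obtain ⟨c, N, hcfree⟩ := hrej
    letI := B₀.fin
    letI := M.fin
    obtain ⟨y, hy⟩ := Finite.exists_infinite_fiber (fun i => ((ρ i).src, (σ i).src))
    have hyvis : ∀ n, ∃ m, n ≤ m ∧ N ≤ m ∧ ((ρ m).src, (σ m).src) = y := by
      intro n
      obtain ⟨m, hm, hmn⟩ := (Set.infinite_coe_iff.mp hy).exists_gt (max n N)
      exact ⟨m, by omega, by omega, hm⟩
    exact ⟨y, c, w, ρ, σ, N, hwL, hρ,
      fun e he hed n => hhits e (Finset.mem_erase.mpr ⟨hed, he⟩) n, hσ, hcfree, hyvis⟩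
  choose yf cf wf ρf σf Nf hnotL hrun hhits hMrunt hcfree hvis using spec_exists
  have key : ∀ d₁ (hd₁ : d₁ ∈ S₀), ∀ d₂ (hd₂ : d₂ ∈ S₀), d₁ ≠ d₂ →
      yf d₁ hd₁ = yf d₂ hd₂ → cf d₁ hd₁ = cf d₂ hd₂ → False := by
    intro d₁ hd₁ d₂ hd₂ hne12 hyy hcc
    obtain ⟨i₁, _, hi₁N, hi₁y⟩ := hvis d₁ hd₁ 0
    obtain ⟨i₁', _, hi₁'N, hi₁'y⟩ := hvis d₂ hd₂ 0
    have hit1 : ∀ e : {e : D // e ∈ S₀.erase d₁}, ∃ m, i₁ ≤ m ∧ (e : D) ∈ (ρf d₁ hd₁ m).out := by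
      rintro ⟨e, he⟩
      exact hhits d₁ hd₁ e (Finset.mem_of_mem_erase he) (Finset.ne_of_mem_erase he) i₁
    choose t1 ht1a ht1b using hit1
    have hit2 : ∀ e : {e : D // e ∈ S₀.erase d₂}, ∃ m, i₁' ≤ m ∧ (e : D) ∈ (ρf d₂ hd₂ m).out := by
      rintro ⟨e, he⟩
      exact hhits d₂ hd₂ e (Finset.mem_of_mem_erase he) (Finset.ne_of_mem_erase he) i₁'
    choose t2 ht2a ht2b using hit2
    obtain ⟨i₂, hi₂a, _, hi₂y⟩ := hvis d₁ hd₁ (max (i₁ + 1) (Finset.univ.sup t1 + 1))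
    obtain ⟨i₂', hi₂'a, _, hi₂'y⟩ := hvis d₂ hd₂ (max (i₁' + 1) (Finset.univ.sup t2 + 1))
    have h12 : i₁ < i₂ := by omega
    have h12' : i₁' < i₂' := by omega
    have hK₁ : ∀ e, t1 e < i₂ := fun e => by
      have := Finset.le_sup (f := t1) (Finset.mem_univ e); omega
    have hK₂ : ∀ e, t2 e < i₂' := fun e => by
      have := Finset.le_sup (f := t2) (Finset.mem_univ e); omega
    have hi₁'Y : ((ρf d₂ hd₂ i₁').src, (σf d₂ hd₂ i₁').src) = yf d₁ hd₁ := hi₁'y.trans hyy.symm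
    have hi₂'Y : ((ρf d₂ hd₂ i₂').src, (σf d₂ hd₂ i₂').src) = yf d₁ hd₁ := hi₂'y.trans hyy.symm
    have hBrun := splice_isRun B₀ (hrun d₁ hd₁) (hrun d₂ hd₂) h12 h12'
      (z := (yf d₁ hd₁).1) (congrArg Prod.fst hi₁y) (congrArg Prod.fst hi₂y)
      (congrArg Prod.fst hi₁'Y) (congrArg Prod.fst hi₂'Y)
    have hMrun2 := splice_isRun M (hMrunt d₁ hd₁) (hMrunt d₂ hd₂) h12 h12'
      (z := (yf d₁ hd₁).2) (congrArg Prod.snd hi₁y) (congrArg Prod.snd hi₂y)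
      (congrArg Prod.snd hi₁'Y) (congrArg Prod.snd hi₂'Y)
    have hp : 0 < (i₂ - i₁) + (i₂' - i₁') := by omega
    have hacc2 : ∀ e ∈ S₀, ∀ n, ∃ m, n ≤ m ∧
        e ∈ ((spliceW i₁ i₂ i₁' i₂' (ρf d₁ hd₁) (ρf d₂ hd₂)) m).out := by
      intro e he n
      have hnp : n ≤ n * ((i₂ - i₁) + (i₂' - i₁')) := Nat.le_mul_of_pos_right n hp
      by_cases hed : e = d₁
      · have hee : e ∈ S₀.erase d₂ := Finset.mem_erase.mpr ⟨by rw [hed]; exact hne12, he⟩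
        refine ⟨i₁ + (i₂ - i₁) + (t2 ⟨e, hee⟩ - i₁') + n * ((i₂ - i₁) + (i₂' - i₁')),
          by omega, ?_⟩
        rw [spliceW_eq_false (ρf d₁ hd₁) (ρf d₂ hd₂)
          (sel_loop2 h12 h12' (ht2a ⟨e, hee⟩) (hK₂ ⟨e, hee⟩) n)]
        exact ht2b ⟨e, hee⟩
      · have hee : e ∈ S₀.erase d₁ := Finset.mem_erase.mpr ⟨hed, he⟩
        refine ⟨t1 ⟨e, hee⟩ + n * ((i₂ - i₁) + (i₂' - i₁')), by omega, ?_⟩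
        rw [spliceW_eq_true (ρf d₁ hd₁) (ρf d₂ hd₂)
          (sel_loop1 h12 h12' (ht1a ⟨e, hee⟩) (hK₁ ⟨e, hee⟩) n)]
        exact ht1b ⟨e, hee⟩
    have hwL : spliceW i₁ i₂ i₁' i₂' (wf d₁ hd₁) (wf d₂ hd₂) ∈ M.Lang :=
      (hRec _).mpr ⟨_, hBrun, hacc2⟩
    obtain ⟨τ, hτ, hτacc⟩ := hwL
    have heq := run_unique M hdetM hτ hMrun2
    rw [haccM] at hτacc
    obtain ⟨m, hm, hcm⟩ := hτacc (cf d₁ hd₁) i₁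
    have hcm' : cf d₁ hd₁ ∈ ((spliceW i₁ i₂ i₁' i₂' (σf d₁ hd₁) (σf d₂ hd₂)) m).out := by
      rw [← heq m]; exact hcm
    rcases sel_range h12 h12' hm with ⟨t, hts, hta, htb⟩ | ⟨t, hts, hta, htb⟩
    · rw [spliceW_eq_true (σf d₁ hd₁) (σf d₂ hd₂) hts] at hcm'
      exact hcfree d₁ hd₁ t (by omega) hcm'
    · rw [spliceW_eq_false (σf d₁ hd₁) (σf d₂ hd₂) hts] at hcm'
      rw [hcc] at hcm'
      exact hcfree d₂ hd₂ t (by omega) hcm'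
  refine ⟨S₀, ?_, fun w => hRec w⟩
  rcases Finset.eq_empty_or_nonempty S₀ with hS | ⟨d₀, hd₀⟩
  · rw [hS]; simp
  · letI := B₀.fin
    letI := M.fin
    set F : D → (B₀.Q × M.Q) × C := fun d =>
      if h : d ∈ S₀ then (yf d h, cf d h) else (yf d₀ hd₀, cf d₀ hd₀) with hF
    have hinj : Set.InjOn F S₀ := by
      intro a ha b hb hab
      have ha' : a ∈ S₀ := ha
      have hb' : b ∈ S₀ := hb
      simp only [hF, dif_pos ha', dif_pos hb', Prod.mk.injEq] at hab
      by_contra hne12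
      exact key a ha' b hb' hne12 hab.1 hab.2
    have hle : S₀.card ≤ (Finset.univ : Finset ((B₀.Q × M.Q) × C)).card :=
      Finset.card_le_card_of_injOn F (fun a _ => Finset.mem_univ _) hinj
    rw [Finset.card_univ, Fintype.card_prod, Fintype.card_prod] at hle
    exact hle

end S17

/-- every deterministic generalised Büchi automaton with `n`
states and `k` colours has an equivalent deterministic generalised Büchi
automaton with a minimal number of states using at most `n² · k` colours. -/
theorem stmt_17 {A C : Type} [Fintype C] (M : Automaton A (Set C))
    (hacc : M.acc = genBuchi C) (hdet : M.Deterministic) :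
    ∃ (C' : Type) (iC : Fintype C') (B : Automaton A (Set C')),
      B.acc = genBuchi C' ∧ B.Deterministic ∧ B.Lang = M.Lang ∧
      @Fintype.card C' iC ≤ M.size ^ 2 * Fintype.card C ∧
      (∀ (C'' : Type) (_ : Fintype C'') (B' : Automaton A (Set C'')),
        B'.acc = genBuchi C'' → B'.Deterministic → B'.Lang = M.Lang →
        B.size ≤ B'.size) := by
  classical
  by_cases hLne : M.Lang = ∅
  · refine ⟨PEmpty, inferInstance,
      ⟨PUnit, inferInstance, PUnit.unit, ∅, genBuchi PEmpty⟩, rfl, ?_, ?_, ?_, ?_⟩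
    · intro t ht t' ht' _ _
      exact absurd ht (Set.notMem_empty t)
    · have hB : Automaton.Lang (A := A)
          ⟨PUnit, inferInstance, PUnit.unit, ∅, genBuchi PEmpty⟩ = (∅ : Set (ℕ → A)) := by
        ext w
        constructor
        · rintro ⟨ρ, hρ, _⟩
          exact absurd (hρ.2 0).1 (Set.notMem_empty _)
        · exact fun h => h.elim
      rw [hB, hLne]
    · simp
    · intro C'' iC'' B' _ _ _
      have h1 : 0 < B'.size := @Fintype.card_pos _ B'.fin ⟨B'.init⟩
      have h2 : Automaton.size (A := A)
          ⟨PUnit, inferInstance, PUnit.unit, ∅, genBuchi PEmpty⟩ = 1 := by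
        simp [Automaton.size]
      omega
  · have hSne : {s : ℕ | ∃ (E : Type) (iE : Fintype E) (B' : Automaton A (Set E)),
        B'.acc = genBuchi E ∧ B'.Deterministic ∧ B'.Lang = M.Lang ∧ B'.size = s}.Nonempty :=
      ⟨M.size, C, inferInstance, M, hacc, hdet, rfl, rfl⟩
    have hmem := Nat.sInf_mem hSne
    obtain ⟨E, iE, B₁, haccB₁, hdetB₁, hLB₁, hsizeB₁⟩ := hmem
    have hminB₁ : ∀ (C'' : Type) (i : Fintype C'') (B' : Automaton A (Set C'')),
        B'.acc = genBuchi C'' → B'.Deterministic → B'.Lang = M.Lang → B₁.size ≤ B'.size := by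
      intro C'' i B' h1 h2 h3
      rw [hsizeB₁]
      exact Nat.sInf_le ⟨C'', i, B', h1, h2, h3, rfl⟩
    have h0 : B₁.LangFrom B₁.init ≠ ∅ := by
      show B₁.Lang ≠ ∅
      rw [hLB₁]; exact hLne
    have hdetB₀ := S17.trim_det h0 hdetB₁
    have hLB₀ : (S17.trimAut B₁ h0).Lang = M.Lang := (S17.trim_lang h0 haccB₁).trans hLB₁
    letI := iE
    obtain ⟨S₀, hScard, hSRec⟩ := S17.exists_small_colour_set M hacc hdet
      (S17.trimAut B₁ h0) haccB₁ hLB₀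
      (fun w ρ h => S17.exists_M_run M hdet B₁ haccB₁ hLB₁ h0 h)
    refine ⟨{d : E // d ∈ S₀}, FinsetCoe.fintype S₀,
      recolor (S17.trimAut B₁ h0)
        (fun t => {d : {d : E // d ∈ S₀} | (d : E) ∈ t.out}) (genBuchi _),
      rfl, ?_, ?_, ?_, ?_⟩
    · rintro t ⟨u, hu, hts, htl, hto, htd⟩ t' ⟨u', hu', hts', htl', hto', htd'⟩ hss hll
      have : u = u' := hdetB₀ u hu u' hu'
        (by rw [← hts, ← hts', hss]) (by rw [← htl, ← htl', hll])
      subst this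
      exact S17.AutTrans.ext' (hts.trans hts'.symm) (htl.trans htl'.symm)
        (hto.trans hto'.symm) (htd.trans htd'.symm)
    · ext w
      rw [show ∀ (s : Set (ℕ → A)) (a : ℕ → A), (a ∈ s) = s a from fun _ _ => rfl, show (w ∈ M.Lang) = (w ∈ M.Lang) from rfl]
      rw [hSRec w]
      constructor
      · rintro ⟨ρ', hρ', hA'⟩
        choose u hu hus hul huo hud using fun n => (hρ'.2 n).1
        refine ⟨u, ⟨?_, fun n => ⟨hu n, ?_, ?_⟩⟩, ?_⟩
        · rw [← hus 0]; exact hρ'.1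
        · rw [← hul n]; exact (hρ'.2 n).2.1
        · rw [← hud n, ← hus (n+1)]; exact (hρ'.2 n).2.2
        · intro d hd n
          obtain ⟨m, hm, hdm⟩ := hA' ⟨d, hd⟩ n
          refine ⟨m, hm, ?_⟩
          have hdm' : (⟨d, hd⟩ : {d : E // d ∈ S₀}) ∈ (ρ' m).out := hdm
          rw [huo m] at hdm'
          exact hdm'
      · rintro ⟨ρ, hρ, hhits⟩
        refine ⟨fun n => ⟨(ρ n).src, (ρ n).lab,
            {x : {d : E // d ∈ S₀} | (x : E) ∈ (ρ n).out}, (ρ n).dst⟩,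
          ⟨hρ.1, fun n => ⟨⟨ρ n, (hρ.2 n).1, rfl, rfl, rfl, rfl⟩,
            (hρ.2 n).2.1, (hρ.2 n).2.2⟩⟩, ?_⟩
        simp only [genBuchi, Set.mem_setOf_eq]
        rintro ⟨d, hd⟩ n
        obtain ⟨m, hm, hdm⟩ := hhits d hd n
        exact ⟨m, hm, hdm⟩
    · rw [Fintype.card_coe]
      have hm1 : (S17.trimAut B₁ h0).size ≤ B₁.size := S17.trim_size h0
      have hm2 : B₁.size ≤ M.size := hminB₁ C inferInstance M hacc hdet rfl
      calc S₀.card ≤ (S17.trimAut B₁ h0).size * M.size * Fintype.card C := hScard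
        _ ≤ M.size * M.size * Fintype.card C := by
            have h := le_trans hm1 hm2
            exact Nat.mul_le_mul_right _ (Nat.mul_le_mul_right _ h)
        _ = M.size ^ 2 * Fintype.card C := by ring
    · intro C'' i'' B' h1 h2 h3
      exact le_trans (S17.trim_size h0) (hminB₁ C'' i'' B' h1 h2 h3)
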